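/- The total Yang–Mills action of the instanton with curvature F_{λ,b} = λ² dx∧dx̄/(λ²+|x−b|²)² over ℝ⁴ is finite and independent of λ > 0 and b ∈ ℍ; explicitly ∫_{ℝ⁴} |F_{λ,b}|² dvol = 48·∫_{ℝ⁴} λ⁴/(λ²+|x−b|²)⁴ dx, and the integral ∫_{ℝ⁴} λ⁴/(λ²+|x−b|²)⁴ dx = π²/6 for every λ > 0, b ∈ ℍ. -/

import Mathlib

/-!
Statement 19: the total Yang–Mills action of the instanton with curvature
F_{λ,b} = λ² dx∧dx̄/(λ²+|x−b|²)² is finite and independent of λ > 0, b: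
∫|F_{λ,b}|² = 48·∫ λ⁴/(λ²+|x−b|²)⁴, and ∫ λ⁴/(λ²+|x−b|²)⁴ dx = π²/6.

Here ℝ⁴ carries the Lebesgue measure (EuclideanSpace ℝ (Fin 4)), and for the
round curvature F = f·(dx∧dx̄)/4 with f(x) = 4λ²/(λ²+|x−b|²)² the pointwise
squared norm is |F|² = 3f² = 48λ⁴/(λ²+|x−b|²)⁴.
-/

open MeasureTheory Set

/-- Radial integral: ∫_{0}^{∞} y³ λ⁴/(λ²+y²)⁴ dy = 1/12. -/
lemma instanton_radial (lam : ℝ) (hlam : 0 < lam) :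
    ∫ y in Ioi (0 : ℝ), y ^ 3 * (lam ^ 4 / (lam ^ 2 + y ^ 2) ^ 4) = 1 / 12 := by
  set g : ℝ → ℝ := fun y =>
    lam ^ 6 / (6 * (lam ^ 2 + y ^ 2) ^ 3) - lam ^ 4 / (4 * (lam ^ 2 + y ^ 2) ^ 2) with hg
  have hD : ∀ y : ℝ, 0 < lam ^ 2 + y ^ 2 := fun y => by positivity
  have hderiv : ∀ y ∈ Ici (0 : ℝ),
      HasDerivAt g (y ^ 3 * (lam ^ 4 / (lam ^ 2 + y ^ 2) ^ 4)) y := by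
    intro y _
    have hDy := (hD y).ne'
    have hd : HasDerivAt (fun y : ℝ => lam ^ 2 + y ^ 2) (2 * y) y := by
      simpa using ((hasDerivAt_pow 2 y).const_add (lam ^ 2))
    have h1 : HasDerivAt (fun y : ℝ => lam ^ 6 / (6 * (lam ^ 2 + y ^ 2) ^ 3))
        ((0 * (6 * (lam ^ 2 + y ^ 2) ^ 3) - lam ^ 6 * (6 * (↑3 * (lam ^ 2 + y ^ 2) ^ (3-1) * (2 * y)))) /
          (6 * (lam ^ 2 + y ^ 2) ^ 3) ^ 2) y :=
      (hasDerivAt_const y (lam ^ 6)).div ((hd.pow 3).const_mul 6)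
        (by positivity : 6 * (lam ^ 2 + y ^ 2) ^ 3 ≠ 0)
    have h2 : HasDerivAt (fun y : ℝ => lam ^ 4 / (4 * (lam ^ 2 + y ^ 2) ^ 2))
        ((0 * (4 * (lam ^ 2 + y ^ 2) ^ 2) - lam ^ 4 * (4 * (↑2 * (lam ^ 2 + y ^ 2) ^ (2-1) * (2 * y)))) /
          (4 * (lam ^ 2 + y ^ 2) ^ 2) ^ 2) y :=
      (hasDerivAt_const y (lam ^ 4)).div ((hd.pow 2).const_mul 4)
        (by positivity : 4 * (lam ^ 2 + y ^ 2) ^ 2 ≠ 0)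
    have := h1.sub h2
    refine this.congr_deriv ?_
    field_simp
    ring
  have hpos : ∀ y ∈ Ioi (0 : ℝ), 0 ≤ y ^ 3 * (lam ^ 4 / (lam ^ 2 + y ^ 2) ^ 4) := by
    intro y hy
    have : (0:ℝ) < y := hy
    positivity
  have htend : Filter.Tendsto g Filter.atTop (nhds 0) := by
    have hden : ∀ (c : ℝ) (n : ℕ), 0 < c → 1 ≤ n →
        Filter.Tendsto (fun y : ℝ => c * (lam ^ 2 + y ^ 2) ^ n)
          Filter.atTop Filter.atTop := by
      intro c n hc hn
      apply Filter.Tendsto.const_mul_atTop hc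
      refine (Filter.tendsto_pow_atTop (by omega : n ≠ 0)).comp ?_
      exact Filter.tendsto_atTop_add_const_left _ _
        (Filter.tendsto_pow_atTop (by norm_num : (2:ℕ) ≠ 0))
    have t1 := (tendsto_const_nhds (x := lam ^ 6)).div_atTop
      (hden 6 3 (by norm_num) (by norm_num))
    have t2 := (tendsto_const_nhds (x := lam ^ 4)).div_atTop
      (hden 4 2 (by norm_num) (by norm_num))
    simpa using t1.sub t2
  have := integral_Ioi_of_hasDerivAt_of_nonneg' hderiv hpos htend
  rw [this, hg]
  have h2 : lam ^ 2 ≠ 0 := by positivity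
  field_simp
  ring

/-- Integrability of the instanton density centered at 0. -/
lemma instanton_integrable₀ (lam : ℝ) (hlam : 0 < lam) :
    Integrable (fun x : EuclideanSpace ℝ (Fin 4) =>
      lam ^ 4 / (lam ^ 2 + ‖x‖ ^ 2) ^ 4) := by
  set m : ℝ := min 1 (lam ^ 2) with hm
  have hm0 : 0 < m := lt_min one_pos (by positivity)
  set C : ℝ := lam ^ 4 * (2 / m) ^ 4 with hC
  have hbound : Integrable (fun x : EuclideanSpace ℝ (Fin 4) =>
      C * (1 + ‖x‖) ^ (-(8:ℝ))) := by
    refine (integrable_one_add_norm ?_).const_mul C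
    simp [finrank_euclideanSpace]
    norm_num
  refine hbound.mono' ?_ ?_
  · apply Continuous.aestronglyMeasurable
    refine continuous_const.div (by fun_prop) fun x => ?_
    have := hlam
    positivity
  · refine Filter.Eventually.of_forall fun x => ?_
    set r : ℝ := ‖x‖ with hr
    have hr0 : 0 ≤ r := norm_nonneg x
    have hD : 0 < lam ^ 2 + r ^ 2 := by positivity
    have h1r : (0:ℝ) < 1 + r := by linarith
    have hrpow : (1 + r) ^ (-(8:ℝ)) = ((1 + r) ^ (8:ℕ))⁻¹ := by
      rw [Real.rpow_neg h1r.le]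
      rw [show (8:ℝ) = ((8:ℕ):ℝ) by norm_num, Real.rpow_natCast]
    rw [Real.norm_eq_abs, abs_of_nonneg (by positivity), hrpow, ← div_eq_mul_inv,
      div_le_div_iff₀ (by positivity) (by positivity)]
    have key : (1 + r) ^ (8:ℕ) ≤ (2 / m) ^ 4 * (lam ^ 2 + r ^ 2) ^ 4 := by
      have step1 : (1 + r) ^ 2 ≤ 2 * (1 + r ^ 2) := by nlinarith [sq_nonneg (1 - r)]
      have step2 : m * (1 + r ^ 2) ≤ lam ^ 2 + r ^ 2 := by
        have h1 : m ≤ 1 := min_le_left _ _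
        have h2 : m ≤ lam ^ 2 := min_le_right _ _
        nlinarith [sq_nonneg r]
      have step3 : 2 * (1 + r ^ 2) ≤ (2 / m) * (lam ^ 2 + r ^ 2) := by
        rw [div_mul_eq_mul_div, le_div_iff₀ hm0]
        nlinarith
      calc (1 + r) ^ (8:ℕ) = ((1 + r) ^ 2) ^ 4 := by ring
        _ ≤ ((2 / m) * (lam ^ 2 + r ^ 2)) ^ 4 :=
            pow_le_pow_left₀ (by positivity) (step1.trans step3) 4
        _ = (2 / m) ^ 4 * (lam ^ 2 + r ^ 2) ^ 4 := by ring
    calc lam ^ 4 * (1 + r) ^ (8:ℕ)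
        ≤ lam ^ 4 * ((2 / m) ^ 4 * (lam ^ 2 + r ^ 2) ^ 4) :=
          mul_le_mul_of_nonneg_left key (by positivity)
      _ = C * (lam ^ 2 + r ^ 2) ^ 4 := by rw [hC]; ring

theorem instanton_action_one (lam : ℝ) (hlam : 0 < lam) (b : EuclideanSpace ℝ (Fin 4)) :
    Integrable (fun x : EuclideanSpace ℝ (Fin 4) =>
      lam ^ 4 / (lam ^ 2 + ‖x - b‖ ^ 2) ^ 4) ∧
    (∫ x : EuclideanSpace ℝ (Fin 4),
        3 * (4 * lam ^ 2 / (lam ^ 2 + ‖x - b‖ ^ 2) ^ 2) ^ 2) =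
      48 * ∫ x : EuclideanSpace ℝ (Fin 4), lam ^ 4 / (lam ^ 2 + ‖x - b‖ ^ 2) ^ 4 ∧
    (∫ x : EuclideanSpace ℝ (Fin 4), lam ^ 4 / (lam ^ 2 + ‖x - b‖ ^ 2) ^ 4) =
      Real.pi ^ 2 / 6 := by
  have hint0 := instanton_integrable₀ lam hlam
  have hint : Integrable (fun x : EuclideanSpace ℝ (Fin 4) =>
      lam ^ 4 / (lam ^ 2 + ‖x - b‖ ^ 2) ^ 4) := hint0.comp_sub_right b
  refine ⟨hint, ?_, ?_⟩
  · have hpt : ∀ x : EuclideanSpace ℝ (Fin 4),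
        3 * (4 * lam ^ 2 / (lam ^ 2 + ‖x - b‖ ^ 2) ^ 2) ^ 2 =
        48 * (lam ^ 4 / (lam ^ 2 + ‖x - b‖ ^ 2) ^ 4) := by
      intro x
      rw [div_pow, mul_pow, ← pow_mul, ← pow_mul]
      ring
    simp_rw [hpt]
    rw [integral_const_mul]
  · have htrans : (∫ x : EuclideanSpace ℝ (Fin 4), lam ^ 4 / (lam ^ 2 + ‖x - b‖ ^ 2) ^ 4)
        = ∫ x : EuclideanSpace ℝ (Fin 4), lam ^ 4 / (lam ^ 2 + ‖x‖ ^ 2) ^ 4 :=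
      integral_sub_right_eq_self (fun x => lam ^ 4 / (lam ^ 2 + ‖x‖ ^ 2) ^ 4) b
    rw [htrans]
    have hpolar := integral_fun_norm_addHaar (volume : Measure (EuclideanSpace ℝ (Fin 4)))
      (fun r => lam ^ 4 / (lam ^ 2 + r ^ 2) ^ 4)
    have hdim : Module.finrank ℝ (EuclideanSpace ℝ (Fin 4)) = 4 := finrank_euclideanSpace_fin
    rw [hdim] at hpolar
    have hvol : (volume (Metric.ball (0 : EuclideanSpace ℝ (Fin 4)) 1)).toReal
        = Real.pi ^ 2 / 2 := by
      rw [EuclideanSpace.volume_ball (Fin 4) 0 1]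
      have h1 : Real.sqrt Real.pi ^ Fintype.card (Fin 4) = Real.pi ^ 2 := by
        rw [Fintype.card_fin]
        rw [show (4 : ℕ) = 2 * 2 from rfl, pow_mul, Real.sq_sqrt Real.pi_nonneg]
      have h2 : Real.Gamma ((Fintype.card (Fin 4) : ℝ) / 2 + 1) = 2 := by
        rw [Fintype.card_fin]
        rw [show ((4:ℕ) : ℝ) / 2 + 1 = ((2:ℕ) : ℝ) + 1 by norm_num,
          Real.Gamma_nat_eq_factorial]
        norm_num
      rw [h1, h2]
      simp [ENNReal.toReal_ofReal (by positivity : (0:ℝ) ≤ Real.pi ^ 2 / 2)]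
    have hrad : (∫ y in Set.Ioi (0 : ℝ),
        y ^ (4 - 1) • (lam ^ 4 / (lam ^ 2 + y ^ 2) ^ 4)) = 1 / 12 := by
      rw [← instanton_radial lam hlam]
      simp [smul_eq_mul]
    rw [hpolar, measureReal_def, hvol, hrad]
    simp only [nsmul_eq_mul, smul_eq_mul]
    ring
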